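/- Explicit formula for the proposal: integrating the splitting exactly, the proposal after one step satisfies q* = q cos δ + v' sin δ − (δ/2) sin δ · C∇Ψ(q) and v* = −q sin δ + v' cos δ − (δ/2) cos δ · C∇Ψ(q) − (δ/2) C∇Ψ(q*), and consequently ‖q* − q − δv'‖_s ≲ δ²(1 + ‖q‖_s + ‖v'‖_s) using |cos δ − 1| ≤ δ²/2, |sin δ − δ| ≤ δ³/6, |sin δ| ≤ δ, and ‖C∇Ψ(q)‖_s ≤ K(1 + ‖q‖_s). -/

import Mathlib

/-- For the exactly integrated splitting proposal
`q* = q cos δ + v' sin δ − (δ/2) sin δ · C∇Ψ(q)` (with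
`v* = −q sin δ + v' cos δ − (δ/2) cos δ · C∇Ψ(q) − (δ/2) C∇Ψ(q*)`), under the
linear growth bound `‖C∇Ψ(q)‖ ≤ K(1 + ‖q‖)` one has
`‖q* − q − δ v'‖ ≲ δ²(1 + ‖q‖ + ‖v'‖)` uniformly in `δ ∈ (0,1)`. -/
theorem proposal_q_increment_bound {H : Type*} [NormedAddCommGroup H]
    [NormedSpace ℝ H]
    (g : H → H) (K : ℝ) (hK : 0 ≤ K) (hg : ∀ q, ‖g q‖ ≤ K * (1 + ‖q‖)) :
    ∃ C : ℝ, 0 < C ∧ ∀ (δ : ℝ), 0 < δ → δ < 1 → ∀ q v' qstar vstar : H,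
      qstar = Real.cos δ • q + Real.sin δ • v' -
          (δ / 2 * Real.sin δ) • g q →
      vstar = -(Real.sin δ • q) + Real.cos δ • v' -
          (δ / 2 * Real.cos δ) • g q - (δ / 2) • g qstar →
      ‖qstar - q - δ • v'‖ ≤ C * δ ^ 2 * (1 + ‖q‖ + ‖v'‖) := by
  refine ⟨1 + K, by linarith, fun δ hδ hδ1 q v' qstar vstar hq hv => ?_⟩
  have hδ2 : (0:ℝ) < δ ^ 2 := by positivity
  have hcos : |Real.cos δ - 1| ≤ δ ^ 2 / 2 := by
    rw [abs_sub_comm, abs_of_nonneg (by nlinarith [Real.cos_le_one δ])]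
    nlinarith [Real.one_sub_sq_div_two_le_cos (x := δ)]
  have hsin : |Real.sin δ - δ| ≤ δ ^ 2 / 4 := by
    rw [abs_sub_comm, abs_of_nonneg (by nlinarith [Real.sin_lt hδ])]
    nlinarith [Real.sin_gt_sub_cube hδ]
  have hsin' : |Real.sin δ| ≤ δ := by
    rw [abs_of_nonneg (Real.sin_nonneg_of_nonneg_of_le_pi hδ.le
      (by nlinarith [Real.pi_gt_three]))]
    exact (Real.sin_lt hδ).le
  have key : qstar - q - δ • v' =
      (Real.cos δ - 1) • q + (Real.sin δ - δ) • v' - (δ / 2 * Real.sin δ) • g q := by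
    rw [hq]; module
  rw [key]
  have h1 : ‖(Real.cos δ - 1) • q + (Real.sin δ - δ) • v' - (δ / 2 * Real.sin δ) • g q‖
      ≤ ‖(Real.cos δ - 1) • q‖ + ‖(Real.sin δ - δ) • v'‖ + ‖(δ / 2 * Real.sin δ) • g q‖ :=
    (norm_sub_le _ _).trans (by gcongr; exact norm_add_le _ _)
  refine h1.trans ?_
  rw [norm_smul, norm_smul, norm_smul, Real.norm_eq_abs, Real.norm_eq_abs, Real.norm_eq_abs]
  have hgq := hg q
  have hgnn : (0:ℝ) ≤ ‖g q‖ := norm_nonneg _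
  have habs : |δ / 2 * Real.sin δ| ≤ δ / 2 * δ := by
    rw [abs_mul, abs_of_nonneg (by linarith : (0:ℝ) ≤ δ / 2)]
    exact mul_le_mul_of_nonneg_left hsin' (by linarith)
  have hq0 : (0:ℝ) ≤ ‖q‖ := norm_nonneg _
  have hv0 : (0:ℝ) ≤ ‖v'‖ := norm_nonneg _
  have b1 : |Real.cos δ - 1| * ‖q‖ ≤ δ ^ 2 / 2 * ‖q‖ := by gcongr
  have b2 : |Real.sin δ - δ| * ‖v'‖ ≤ δ ^ 2 / 4 * ‖v'‖ := by gcongr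
  have b3 : |δ / 2 * Real.sin δ| * ‖g q‖ ≤ δ / 2 * δ * (K * (1 + ‖q‖)) := by
    exact mul_le_mul habs hgq hgnn (by positivity)
  nlinarith [mul_nonneg hK hq0, mul_nonneg hδ2.le hq0, mul_nonneg hδ2.le hv0,
    mul_nonneg (mul_nonneg hδ2.le hK) hq0]
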